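/- For each integer d ≥ 2, the distortion of F_d in G_d is bounded above by a polynomial of degree d, i.e. Dist_{G_d}^{F_d} ⪯ n^d, where G_d = ⟨x₁, …, x_d, t | t x₁ t^{-1} = x₁, t x_i t^{-1} = x_i x_{i-1}^{-1} for 2 ≤ i ≤ d⟩ and F_d is the subgroup generated by x₁, …, x_d. -/

import Mathlib

/-- The word length of `g` with respect to a set `S` of letters. -/
noncomputable def wordLength {G : Type*} [Group G] (S : Set G) (g : G) : ℕ :=
  sInf {n | ∃ l : List G, l.length = n ∧ (∀ x ∈ l, x ∈ S ∨ x⁻¹ ∈ S) ∧ l.prod = g}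

/-- The distortion function: `Dist(r) = max { |h|_T : h ∈ H, |h|_S ≤ r }`. -/
noncomputable def distortion {G : Type*} [Group G] (S T : Set G) (H : Subgroup G)
    (r : ℕ) : ℕ :=
  sSup {n | ∃ h ∈ H, wordLength S h ≤ r ∧ wordLength T h = n}

/-- `f ⪯ g`. -/
def Dominated (f g : ℕ → ℕ) : Prop :=
  ∃ A B C D : ℕ, 0 < A ∧ 0 < B ∧ 0 < C ∧ ∀ x : ℕ, D < x → f x ≤ A * g (B * x) + C * x

/-- The generator `x_{i+1}` of the free group underlying the presentation of `G_d`. -/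
def gdX (d : ℕ) (i : Fin d) : FreeGroup (Fin d ⊕ Unit) := FreeGroup.of (Sum.inl i)

/-- The generator `t` of the free group underlying the presentation of `G_d`. -/
def gdT (d : ℕ) : FreeGroup (Fin d ⊕ Unit) := FreeGroup.of (Sum.inr ())

/-- The predecessor index. -/
def fpred {d : ℕ} (i : Fin d) : Fin d :=
  ⟨i.val - 1, lt_of_le_of_lt (Nat.sub_le _ _) i.isLt⟩

/-- The image of `x_i` under conjugation by `t`. -/
def gdTarget (d : ℕ) (i : Fin d) : FreeGroup (Fin d ⊕ Unit) :=
  if i.val = 0 then gdX d i else gdX d i * (gdX d (fpred i))⁻¹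

/-- The relators of `G_d`. -/
def gdRels (d : ℕ) : Set (FreeGroup (Fin d ⊕ Unit)) :=
  {r | ∃ i : Fin d, r = gdT d * gdX d i * (gdT d)⁻¹ * (gdTarget d i)⁻¹}

/-- The group `G_d = ⟨x₁, …, x_d, t ∣ t x₁ t⁻¹ = x₁, t x_i t⁻¹ = x_i x_{i-1}⁻¹⟩`. -/
abbrev GD (d : ℕ) := PresentedGroup (gdRels d)

/-- The image of a generator in `G_d`. -/
def gdGen (d : ℕ) (a : Fin d ⊕ Unit) : GD d := PresentedGroup.of a

/-- The image of the generator `x_{i+1}` in `G_d`. -/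
def gdx (d : ℕ) (i : Fin d) : GD d := PresentedGroup.of (Sum.inl i)

/-- The subgroup `F_d` of `G_d` generated by `x₁, …, x_d`. -/
def FD (d : ℕ) : Subgroup (GD d) := Subgroup.closure (Set.range (gdx d))

/-! ### Auxiliary material for the proof -/

section FwordSec
variable {G : Type*} [Group G]

/-- `g` is a product of at most `n` letters from `T ∪ T⁻¹`. -/
def Fword (T : Set G) (n : ℕ) (g : G) : Prop :=
  ∃ l : List G, (∀ x ∈ l, x ∈ T ∨ x⁻¹ ∈ T) ∧ l.prod = g ∧ l.length ≤ n

lemma Fword.mono {T : Set G} {n m : ℕ} {g : G} (h : Fword T n g) (hnm : n ≤ m) :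
    Fword T m g := by
  obtain ⟨l, h1, h2, h3⟩ := h
  exact ⟨l, h1, h2, h3.trans hnm⟩

lemma Fword.of_mem {T : Set G} {g : G} (h : g ∈ T) : Fword T 1 g :=
  ⟨[g], by simpa using Or.inl h, by simp, by simp⟩

lemma Fword.mul {T : Set G} {n m : ℕ} {g h : G} (hg : Fword T n g) (hh : Fword T m h) :
    Fword T (n + m) (g * h) := by
  obtain ⟨l1, a1, b1, c1⟩ := hg
  obtain ⟨l2, a2, b2, c2⟩ := hh
  refine ⟨l1 ++ l2, ?_, by simp [b1, b2], by simpa using Nat.add_le_add c1 c2⟩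
  intro x hx
  rcases List.mem_append.mp hx with hx | hx
  · exact a1 x hx
  · exact a2 x hx

lemma Fword.inv {T : Set G} {n : ℕ} {g : G} (hg : Fword T n g) : Fword T n g⁻¹ := by
  obtain ⟨l, a, b, c⟩ := hg
  refine ⟨(l.map (fun x => x⁻¹)).reverse, ?_, ?_, by simpa using c⟩
  · intro x hx
    simp only [List.mem_reverse, List.mem_map] at hx
    obtain ⟨y, hy, rfl⟩ := hx
    rcases a y hy with h | h
    · exact Or.inr (by simpa using h)
    · exact Or.inl h
  · rw [← List.prod_inv_reverse, b]

lemma Fword.prod_mem_closure {T : Set G} {n : ℕ} {g : G} (hg : Fword T n g) :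
    g ∈ Subgroup.closure T := by
  obtain ⟨l, a, b, c⟩ := hg
  subst b
  refine Subgroup.list_prod_mem _ (fun x hx => ?_)
  rcases a x hx with h | h
  · exact Subgroup.subset_closure h
  · simpa using (Subgroup.closure T).inv_mem (Subgroup.subset_closure h)

end FwordSec

namespace Stmt12Aux

variable {d : ℕ}

/-- The image of `t` in `G_d`. -/
def tG (d : ℕ) : GD d := PresentedGroup.of (Sum.inr ())

lemma rel_main (i : Fin d) :
    tG d * gdx d i * (tG d)⁻¹ = PresentedGroup.mk (gdRels d) (gdTarget d i) := by
  have hmem : gdT d * gdX d i * (gdT d)⁻¹ * (gdTarget d i)⁻¹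
      ∈ Subgroup.normalClosure (gdRels d) := Subgroup.subset_normalClosure ⟨i, rfl⟩
  have h1 : PresentedGroup.mk (gdRels d) (gdT d * gdX d i * (gdT d)⁻¹ * (gdTarget d i)⁻¹) = 1 :=
    (QuotientGroup.eq_one_iff _).2 hmem
  have h2 : tG d * gdx d i * (tG d)⁻¹ * (PresentedGroup.mk (gdRels d) (gdTarget d i))⁻¹ = 1 := by
    simp only [map_mul, map_inv] at h1; exact h1
  simpa using mul_eq_one_iff_eq_inv.mp h2

lemma rel_zero (i : Fin d) (h : i.val = 0) :
    tG d * gdx d i * (tG d)⁻¹ = gdx d i := by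
  rw [rel_main i]; simp [gdTarget, h]; rfl

lemma rel_succ (i : Fin d) (h : i.val ≠ 0) :
    tG d * gdx d i * (tG d)⁻¹ = gdx d i * (gdx d (fpred i))⁻¹ := by
  rw [rel_main i]; simp [gdTarget, h, map_mul, map_inv]; rfl

lemma inv_rel_zero (i : Fin d) (h : i.val = 0) :
    (tG d)⁻¹ * gdx d i * tG d = gdx d i := by
  conv_lhs => rw [← rel_zero i h]
  group

lemma inv_rel_succ (i : Fin d) (h : i.val ≠ 0) :
    (tG d)⁻¹ * gdx d i * tG d = gdx d i * ((tG d)⁻¹ * gdx d (fpred i) * tG d) := by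
  have h1 : (tG d)⁻¹ * (gdx d i * (gdx d (fpred i))⁻¹) * tG d = gdx d i := by
    rw [← rel_succ i h]; group
  calc (tG d)⁻¹ * gdx d i * tG d
      = ((tG d)⁻¹ * (gdx d i * (gdx d (fpred i))⁻¹) * tG d)
        * ((tG d)⁻¹ * gdx d (fpred i) * tG d) := by group
    _ = gdx d i * ((tG d)⁻¹ * gdx d (fpred i) * tG d) := by rw [h1]

lemma pow_step (a j : ℕ) : a ^ (j+1) + a ^ j ≤ (a+1) ^ (j+1) :=
  calc a ^ (j+1) + a ^ j = (a+1) * a ^ j := by ring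
    _ ≤ (a+1) * (a+1) ^ j := Nat.mul_le_mul_left _ (Nat.pow_le_pow_left (by omega) j)
    _ = (a+1) ^ (j+1) := (pow_succ' _ _).symm

lemma pow_step2 (a j : ℕ) : a ^ (j+1) + (a+1) ^ j ≤ (a+1) ^ (j+1) := by
  have h1 : a ^ (j+1) ≤ a * (a+1) ^ j :=
    (pow_succ' a j) ▸ Nat.mul_le_mul_left _ (Nat.pow_le_pow_left (by omega) j)
  calc a ^ (j+1) + (a+1) ^ j ≤ a * (a+1) ^ j + (a+1) ^ j := Nat.add_le_add_right h1 _
    _ = (a+1) ^ (j+1) := by ring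

lemma fword_gen (i : Fin d) : Fword (Set.range (gdx d)) 1 (gdx d i) :=
  Fword.of_mem ⟨i, rfl⟩

lemma conj_pos (n : ℕ) (i : Fin d) :
    Fword (Set.range (gdx d)) ((n+1) ^ i.val) (tG d ^ n * gdx d i * (tG d ^ n)⁻¹) := by
  induction n generalizing i with
  | zero => simpa using (fword_gen i).mono (Nat.one_le_pow i.val 1 Nat.one_pos)
  | succ n ih =>
    have key : tG d ^ (n+1) * gdx d i * (tG d ^ (n+1))⁻¹
        = tG d ^ n * (tG d * gdx d i * (tG d)⁻¹) * (tG d ^ n)⁻¹ := by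
      rw [pow_succ]; group
    by_cases h : i.val = 0
    · rw [key, rel_zero i h]
      simpa [h] using ih i
    · rw [key, rel_succ i h]
      have e : tG d ^ n * (gdx d i * (gdx d (fpred i))⁻¹) * (tG d ^ n)⁻¹
          = (tG d ^ n * gdx d i * (tG d ^ n)⁻¹)
            * (tG d ^ n * gdx d (fpred i) * (tG d ^ n)⁻¹)⁻¹ := by group
      rw [e]
      obtain ⟨j, hj⟩ : ∃ j, i.val = j + 1 := ⟨i.val - 1, by omega⟩
      have hp : (fpred i).val = j := by simp [fpred, hj]
      have hb := (ih i).mul (ih (fpred i)).inv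
      refine hb.mono ?_
      rw [hj, hp]
      exact pow_step (n+1) j

lemma conj_neg (n : ℕ) (i : Fin d) :
    Fword (Set.range (gdx d)) ((n+1) ^ i.val) ((tG d ^ n)⁻¹ * gdx d i * tG d ^ n) := by
  induction n generalizing i with
  | zero => simpa using (fword_gen i).mono (Nat.one_le_pow i.val 1 Nat.one_pos)
  | succ n ih =>
    suffices h : ∀ k : ℕ, ∀ i : Fin d, i.val ≤ k →
        Fword (Set.range (gdx d)) ((n+2) ^ i.val)
          ((tG d ^ (n+1))⁻¹ * gdx d i * tG d ^ (n+1)) by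
      simpa using h i.val i le_rfl
    intro k
    induction k with
    | zero =>
      intro i hik
      have h0 : i.val = 0 := Nat.le_zero.mp hik
      have key : (tG d ^ (n+1))⁻¹ * gdx d i * tG d ^ (n+1)
          = (tG d ^ n)⁻¹ * ((tG d)⁻¹ * gdx d i * tG d) * tG d ^ n := by
        rw [pow_succ]; group
      rw [key, inv_rel_zero i h0]
      simpa [h0] using ih i
    | succ k ihk =>
      intro i hik
      by_cases h : i.val = 0
      · have key : (tG d ^ (n+1))⁻¹ * gdx d i * tG d ^ (n+1)
            = (tG d ^ n)⁻¹ * ((tG d)⁻¹ * gdx d i * tG d) * tG d ^ n := by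
          rw [pow_succ]; group
        rw [key, inv_rel_zero i h]
        simpa [h] using ih i
      · obtain ⟨j, hj⟩ : ∃ j, i.val = j + 1 := ⟨i.val - 1, by omega⟩
        have hp : (fpred i).val = j := by simp [fpred, hj]
        have key : (tG d ^ (n+1))⁻¹ * gdx d i * tG d ^ (n+1)
            = (tG d ^ n)⁻¹ * ((tG d)⁻¹ * gdx d i * tG d) * tG d ^ n := by
          rw [pow_succ]; group
        rw [key, inv_rel_succ i h]
        have e : (tG d ^ n)⁻¹ * (gdx d i * ((tG d)⁻¹ * gdx d (fpred i) * tG d)) * tG d ^ n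
            = ((tG d ^ n)⁻¹ * gdx d i * tG d ^ n)
              * ((tG d ^ (n+1))⁻¹ * gdx d (fpred i) * tG d ^ (n+1)) := by
          rw [pow_succ]; group
        rw [e]
        have hb := (ih i).mul (ihk (fpred i) (by omega))
        refine hb.mono ?_
        rw [hj, hp]
        exact pow_step2 (n+1) j

lemma conj_z (hd1 : 1 ≤ d) (m : ℤ) (i : Fin d) :
    Fword (Set.range (gdx d)) ((m.natAbs + 1) ^ (d-1)) (tG d ^ m * gdx d i * (tG d ^ m)⁻¹) := by
  obtain ⟨n, hn | hn⟩ := m.eq_nat_or_neg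
  · subst hn
    rw [zpow_natCast]
    exact (conj_pos n i).mono (by
      simpa using Nat.pow_le_pow_right (by omega : 1 ≤ n+1) (by omega : i.val ≤ d - 1))
  · subst hn
    rw [zpow_neg, zpow_natCast]
    have := (conj_neg n i).mono
      (Nat.pow_le_pow_right (by omega : 1 ≤ n+1) (by omega : i.val ≤ d - 1))
    simpa using this

/-! ### The projection to `ℤ` -/

lemma pi_rels :
    ∀ r ∈ gdRels d, FreeGroup.lift
      (Sum.elim (fun _ : Fin d => (1 : Multiplicative ℤ))
        (fun _ : Unit => Multiplicative.ofAdd 1)) r = 1 := by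
  rintro r ⟨i, rfl⟩
  by_cases h : i.val = 0 <;>
    simp [gdT, gdX, gdTarget, h, map_mul, map_inv]

/-- The projection `G_d → ℤ` counting the exponent sum of `t`. -/
def piGD (d : ℕ) : GD d →* Multiplicative ℤ :=
  PresentedGroup.toGroup (pi_rels (d := d))

lemma piGD_t : piGD d (tG d) = Multiplicative.ofAdd 1 := by
  simp [piGD, tG, PresentedGroup.toGroup.of]

lemma piGD_x (i : Fin d) : piGD d (gdx d i) = 1 := by
  simp [piGD, gdx, PresentedGroup.toGroup.of]

lemma piGD_of_fword {n : ℕ} {g : GD d} (h : Fword (Set.range (gdx d)) n g) :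
    piGD d g = 1 := by
  have hg : g ∈ Subgroup.closure (Set.range (gdx d)) := h.prod_mem_closure
  have hle : Subgroup.closure (Set.range (gdx d)) ≤ (piGD d).ker := by
    rw [Subgroup.closure_le]
    rintro x ⟨i, rfl⟩
    exact piGD_x i
  exact hle hg

lemma piGD_of_FD {g : GD d} (h : g ∈ FD d) : piGD d g = 1 := by
  have hle : FD d ≤ (piGD d).ker := by
    rw [FD, Subgroup.closure_le]
    rintro x ⟨i, rfl⟩
    exact piGD_x i
  exact hle h

/-! ### The decomposition lemma -/

lemma decomp (hd1 : 1 ≤ d) (l : List (GD d))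
    (hl : ∀ a ∈ l, a ∈ Set.range (gdGen d) ∨ a⁻¹ ∈ Set.range (gdGen d)) :
    ∃ (m : ℤ) (f : GD d), l.prod = f * tG d ^ m ∧ m.natAbs ≤ l.length ∧
      Fword (Set.range (gdx d)) (l.length * (l.length + 1) ^ (d-1)) f := by
  induction l using List.reverseRecOn with
  | nil => exact ⟨0, 1, by simp, by simp, ⟨[], by simp, by simp, by simp⟩⟩
  | append_singleton l a ihl =>
    obtain ⟨m, f, hprod, hm, hf⟩ := ihl (fun x hx => hl x (by simp [hx]))
    set L := l.length with hL
    have hlen : (l ++ [a]).length = L + 1 := by simp [hL]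
    have hprod' : (l ++ [a]).prod = l.prod * a := by simp
    have hbound : L * (L + 1) ^ (d-1) + (L + 1) ^ (d-1) ≤ (L+1) * (L + 2) ^ (d-1) := by
      have h1 : (L + 1 : ℕ) ^ (d-1) ≤ (L + 2) ^ (d-1) := Nat.pow_le_pow_left (by omega) _
      calc L * (L + 1) ^ (d-1) + (L + 1) ^ (d-1)
          ≤ L * (L + 2) ^ (d-1) + (L + 2) ^ (d-1) :=
            Nat.add_le_add (Nat.mul_le_mul_left _ h1) h1
        _ = (L+1) * (L + 2) ^ (d-1) := by ring
    have hconjbound : (m.natAbs + 1) ^ (d-1) ≤ (L + 1) ^ (d-1) :=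
      Nat.pow_le_pow_left (by omega) _
    rcases hl a (by simp) with ⟨c, hc⟩ | ⟨c, hc⟩
    · rcases c with i | u
      · -- a = x_i
        refine ⟨m, f * (tG d ^ m * gdx d i * (tG d ^ m)⁻¹), ?_, by omega, ?_⟩
        · rw [hprod', hprod, ← hc]
          show f * tG d ^ m * gdx d i = f * (tG d ^ m * gdx d i * (tG d ^ m)⁻¹) * tG d ^ m
          group
        · rw [hlen]
          refine (hf.mul (conj_z hd1 m i)).mono ?_
          calc L * (L + 1) ^ (d-1) + (m.natAbs + 1) ^ (d-1)
              ≤ L * (L + 1) ^ (d-1) + (L + 1) ^ (d-1) := Nat.add_le_add_left hconjbound _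
            _ ≤ (L+1) * (L + 2) ^ (d-1) := hbound
      · -- a = t
        refine ⟨m + 1, f, ?_, by simp [hlen]; omega, ?_⟩
        · rw [hprod', hprod, ← hc, zpow_add_one]
          show f * tG d ^ m * tG d = f * (tG d ^ m * tG d)
          rw [mul_assoc]
        · rw [hlen]
          refine hf.mono ?_
          calc L * (L + 1) ^ (d-1) ≤ L * (L + 2) ^ (d-1) :=
              Nat.mul_le_mul_left _ (Nat.pow_le_pow_left (by omega) _)
            _ ≤ (L+1) * (L + 2) ^ (d-1) := Nat.mul_le_mul_right _ (by omega)
    · -- a⁻¹ is a generator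
      have hc' : a = (gdGen d c)⁻¹ := by rw [hc]; simp
      rcases c with i | u
      · -- a = x_i⁻¹
        refine ⟨m, f * (tG d ^ m * gdx d i * (tG d ^ m)⁻¹)⁻¹, ?_, by omega, ?_⟩
        · rw [hprod', hprod, hc']
          show f * tG d ^ m * (gdx d i)⁻¹
              = f * (tG d ^ m * gdx d i * (tG d ^ m)⁻¹)⁻¹ * tG d ^ m
          group
        · rw [hlen]
          refine (hf.mul (conj_z hd1 m i).inv).mono ?_
          calc L * (L + 1) ^ (d-1) + (m.natAbs + 1) ^ (d-1)
              ≤ L * (L + 1) ^ (d-1) + (L + 1) ^ (d-1) := Nat.add_le_add_left hconjbound _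
            _ ≤ (L+1) * (L + 2) ^ (d-1) := hbound
      · -- a = t⁻¹
        refine ⟨m - 1, f, ?_, by simp [hlen]; omega, ?_⟩
        · rw [hprod', hprod, hc', zpow_sub_one]
          show f * tG d ^ m * (tG d)⁻¹ = f * (tG d ^ m * (tG d)⁻¹)
          rw [mul_assoc]
        · rw [hlen]
          refine hf.mono ?_
          calc L * (L + 1) ^ (d-1) ≤ L * (L + 2) ^ (d-1) :=
              Nat.mul_le_mul_left _ (Nat.pow_le_pow_left (by omega) _)
            _ ≤ (L+1) * (L + 2) ^ (d-1) := Nat.mul_le_mul_right _ (by omega)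

/-! ### Every element is a word in the generators -/

lemma exists_word (g : GD d) :
    ∃ l : List (GD d), (∀ x ∈ l, x ∈ Set.range (gdGen d) ∨ x⁻¹ ∈ Set.range (gdGen d)) ∧
      l.prod = g := by
  have htop : Subgroup.closure (Set.range (gdGen d)) = ⊤ :=
    PresentedGroup.closure_range_of (gdRels d)
  have hg : g ∈ Subgroup.closure (Set.range (gdGen d)) := htop ▸ Subgroup.mem_top g
  have hg' : g ∈ Submonoid.closure
      (Set.range (gdGen d) ∪ (Set.range (gdGen d))⁻¹) := by
    rw [← Subgroup.closure_toSubmonoid]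
    exact hg
  obtain ⟨l, hl, hp⟩ := Submonoid.exists_list_of_mem_closure hg'
  refine ⟨l, fun x hx => ?_, hp⟩
  rcases hl x hx with h | h
  · exact Or.inl h
  · exact Or.inr (Set.mem_inv.mp h)

/-! ### The key bound -/

lemma key_bound (hd1 : 1 ≤ d) {g : GD d} (hg : g ∈ FD d) (r : ℕ)
    (hr : wordLength (Set.range (gdGen d)) g ≤ r) :
    wordLength (Set.range (gdx d)) g ≤ r * (r + 1) ^ (d - 1) := by
  -- the word set over S is nonempty, so sInf is attained
  obtain ⟨l', hl', hp'⟩ := exists_word g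
  have hne : {n | ∃ l : List (GD d), l.length = n ∧
      (∀ x ∈ l, x ∈ Set.range (gdGen d) ∨ x⁻¹ ∈ Set.range (gdGen d)) ∧ l.prod = g}.Nonempty :=
    ⟨l'.length, l', rfl, hl', hp'⟩
  have hmem := Nat.sInf_mem hne
  obtain ⟨l, hlen, hlet, hprodl⟩ := hmem
  have hlenr : l.length ≤ r := by
    have : l.length = wordLength (Set.range (gdGen d)) g := hlen
    omega
  obtain ⟨m, f, hprod, hm, hf⟩ := decomp hd1 l hlet
  -- m = 0
  have hpi : piGD d g = 1 := piGD_of_FD hg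
  have hpif : piGD d f = 1 := piGD_of_fword hf
  have hpit : piGD d (tG d ^ m) = 1 := by
    have : piGD d g = piGD d f * piGD d (tG d ^ m) := by
      rw [← map_mul, ← hprod, hprodl]
    rw [hpi, hpif, one_mul] at this
    exact this.symm
  have hm0 : m = 0 := by
    have h1 : (Multiplicative.ofAdd (1 : ℤ)) ^ m = 1 := by
      rw [← piGD_t, ← map_zpow]
      exact hpit
    have h2 := congrArg Multiplicative.toAdd h1
    simpa using h2
  have hgf : g = f := by
    rw [← hprodl, hprod, hm0]
    simp
  subst hgf
  obtain ⟨lf, hlf, hpf, hlenf⟩ := hf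
  have h1 : wordLength (Set.range (gdx d)) g ≤ lf.length :=
    Nat.sInf_le ⟨lf, rfl, hlf, hpf⟩
  have h2 : l.length * (l.length + 1) ^ (d-1) ≤ r * (r + 1) ^ (d-1) :=
    Nat.mul_le_mul hlenr (Nat.pow_le_pow_left (by omega) _)
  omega

end Stmt12Aux

theorem stmt12 (d : ℕ) (hd : 2 ≤ d) :
    Dominated (distortion (Set.range (gdGen d)) (Set.range (gdx d)) (FD d))
      (fun n => n ^ d) := by
  refine ⟨1, 2, 1, 0, one_pos, two_pos, one_pos, ?_⟩
  intro x hx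
  simp only
  have hub : distortion (Set.range (gdGen d)) (Set.range (gdx d)) (FD d) x ≤ (2 * x) ^ d := by
    apply csSup_le'
    rintro n ⟨h, hFD, hS, hT⟩
    have hk := Stmt12Aux.key_bound (by omega) hFD x hS
    have h1 : x * (x + 1) ^ (d - 1) ≤ (2 * x) ^ d := by
      have e : d = (d - 1) + 1 := by omega
      have h2 : (x + 1 : ℕ) ≤ 2 * x := by omega
      calc x * (x + 1) ^ (d - 1) ≤ (2 * x) * (2 * x) ^ (d - 1) :=
          Nat.mul_le_mul (by omega) (Nat.pow_le_pow_left h2 _)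
        _ = (2 * x) ^ ((d - 1) + 1) := (pow_succ' _ _).symm
        _ = (2 * x) ^ d := by rw [← e]
    omega
  omega
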